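/- arXiv:1912.11220 — 3 statements merged into one kernel-verified Lean document; each statement's English description precedes it below -/
import Mathlib

section
/- Let p be a prime and let M be an even lattice of level exactly p. Let v ∈ M be a primitive vector with (v,v) > 0, and let σ_v be the reflection on M⊗ℚ defined by σ_v(x) = x − (2(x,v)/(v,v))·v. Then σ_v(M) = M if and only if either (v,v) = 2, or (v,v) = 2p and (v,l) ∈ pℤ for all l ∈ M (equivalently v/p ∈ M^∨). -/
open Matrix

namespace LatQ

variable {ι κ : Type*} [Fintype ι] [Fintype κ]

/-- The bilinear form on `ι → ℚ` given by the matrix `F`. -/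
def bform (F : Matrix ι ι ℚ) (x y : ι → ℚ) : ℚ := x ⬝ᵥ F *ᵥ y

/-- A rational number is an integer. -/
def isIntQ (q : ℚ) : Prop := ∃ m : ℤ, q = (m : ℚ)

lemma isIntQ_add {a b : ℚ} (ha : isIntQ a) (hb : isIntQ b) : isIntQ (a + b) := by
  obtain ⟨m, rfl⟩ := ha; obtain ⟨n, rfl⟩ := hb; exact ⟨m + n, by push_cast; ring⟩

lemma bform_add_left (F : Matrix ι ι ℚ) (a b y : ι → ℚ) :
    bform F (a + b) y = bform F a y + bform F b y := add_dotProduct a b _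

lemma bform_zero_left (F : Matrix ι ι ℚ) (y : ι → ℚ) : bform F 0 y = 0 := zero_dotProduct _

lemma bform_zsmul_left (F : Matrix ι ι ℚ) (c : ℤ) (x y : ι → ℚ) :
    bform F (c • x) y = (c : ℚ) * bform F x y := by
  unfold bform
  rw [← Int.cast_smul_eq_zsmul ℚ c x, smul_dotProduct, smul_eq_mul]

/-- The dual lattice of `L` with respect to the form `F`, inside the ambient space `ι → ℚ`. -/
def dual (F : Matrix ι ι ℚ) (L : Submodule ℤ (ι → ℚ)) : Submodule ℤ (ι → ℚ) where
  carrier := {x | ∀ y ∈ L, isIntQ (bform F x y)}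
  zero_mem' := fun y _ => ⟨0, by simp [bform_zero_left]⟩
  add_mem' := fun ha hb y hy => by
    have := isIntQ_add (ha y hy) (hb y hy)
    rwa [← bform_add_left] at this
  smul_mem' := fun c x hx y hy => by
    obtain ⟨m, hm⟩ := hx y hy
    exact ⟨c * m, by rw [bform_zsmul_left, hm]; push_cast; ring⟩

/-- The standard lattice `ℤ^ι` inside `ℚ^ι`. -/
def stdLat (ι : Type*) : Submodule ℤ (ι → ℚ) where
  carrier := {x | ∀ i, isIntQ (x i)}
  zero_mem' := fun i => ⟨0, by simp⟩
  add_mem' := fun ha hb i => isIntQ_add (ha i) (hb i)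
  smul_mem' := fun c x hx i => by
    obtain ⟨m, hm⟩ := hx i
    exact ⟨c * m, by rw [Pi.smul_apply, hm, zsmul_eq_mul]; push_cast; ring⟩

/-- `L` is an even lattice (of full rank) in `(ι → ℚ, bform F)`. -/
structure IsEvenLattice [DecidableEq ι] (F : Matrix ι ι ℚ) (L : Submodule ℤ (ι → ℚ)) : Prop where
  fg : L.FG
  spans : Submodule.span ℚ (L : Set (ι → ℚ)) = ⊤
  symm : F.IsSymm
  nondeg : F.det ≠ 0
  integral : ∀ x ∈ L, ∀ y ∈ L, isIntQ (bform F x y)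
  even : ∀ x ∈ L, ∃ m : ℤ, bform F x x = 2 * m

/-- The real quadratic form of `F` diagonalizes with `bp` positive and `bm` negative entries. -/
def HasSignature [DecidableEq ι] (F : Matrix ι ι ℚ) (bp bm : ℕ) : Prop :=
  ∃ P : Matrix ι ι ℝ, IsUnit P.det ∧ (Pᵀ * F.map ((↑) : ℚ → ℝ) * P).IsDiag ∧
    Nat.card {i : ι // 0 < (Pᵀ * F.map ((↑) : ℚ → ℝ) * P) i i} = bp ∧
    Nat.card {i : ι // (Pᵀ * F.map ((↑) : ℚ → ℝ) * P) i i < 0} = bm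

/-- `N` is the level of the even lattice `L`: the smallest positive integer with
`N·(x,x) ∈ 2ℤ` for all `x` in the dual lattice. -/
def HasLevel (F : Matrix ι ι ℚ) (L : Submodule ℤ (ι → ℚ)) (N : ℕ) : Prop :=
  0 < N ∧ (∀ x ∈ dual F L, ∃ m : ℤ, (N : ℚ) * bform F x x = 2 * m) ∧
    ∀ N' : ℕ, 0 < N' → (∀ x ∈ dual F L, ∃ m : ℤ, (N' : ℚ) * bform F x x = 2 * m) → N ≤ N'

/-- The order of the discriminant group `L^∨/L`. -/
noncomputable def discCard (F : Matrix ι ι ℚ) (L : Submodule ℤ (ι → ℚ)) : ℕ :=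
  Nat.card ((↥(dual F L)) ⧸ (Submodule.comap (dual F L).subtype L))

/-- Two lattices (with ambient forms) are isometric. -/
def Isometric (F : Matrix ι ι ℚ) (L : Submodule ℤ (ι → ℚ))
    (F' : Matrix κ κ ℚ) (L' : Submodule ℤ (κ → ℚ)) : Prop :=
  ∃ e : L ≃ₗ[ℤ] L', ∀ x y : L,
    bform F' ((e x : κ → ℚ)) ((e y : κ → ℚ)) = bform F (x : ι → ℚ) (y : ι → ℚ)

/-- The isometry group `O(L)` of the lattice `L` with form `F`. -/
def OGroup (F : Matrix ι ι ℚ) (L : Submodule ℤ (ι → ℚ)) : Subgroup (↥L ≃ₗ[ℤ] ↥L) where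
  carrier := {e | ∀ x y : L,
    bform F ((e x : ι → ℚ)) ((e y : ι → ℚ)) = bform F (x : ι → ℚ) (y : ι → ℚ)}
  one_mem' := fun x y => rfl
  mul_mem' := fun {a b} ha hb x y => by
    have h1 : ∀ z : L, (a * b) z = a (b z) := fun z => rfl
    rw [h1, h1, ha, hb]
  inv_mem' := fun {a} ha x y => by
    have h := ha (a⁻¹ x) (a⁻¹ y)
    have hx : a (a⁻¹ x) = x := a.apply_symm_apply x
    have hy : a (a⁻¹ y) = y := a.apply_symm_apply y
    rw [hx, hy] at h
    exact h.symm

/-- Orthogonal direct sum of forms. -/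
def oplusF (F : Matrix ι ι ℚ) (G : Matrix κ κ ℚ) : Matrix (ι ⊕ κ) (ι ⊕ κ) ℚ :=
  Matrix.fromBlocks F 0 0 G

/-- Orthogonal direct sum of lattices. -/
def oplusL (L : Submodule ℤ (ι → ℚ)) (M : Submodule ℤ (κ → ℚ)) :
    Submodule ℤ (ι ⊕ κ → ℚ) where
  carrier := {x | (fun i => x (Sum.inl i)) ∈ L ∧ (fun j => x (Sum.inr j)) ∈ M}
  zero_mem' := ⟨L.zero_mem, M.zero_mem⟩
  add_mem' := fun ha hb => ⟨L.add_mem ha.1 hb.1, M.add_mem ha.2 hb.2⟩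
  smul_mem' := fun c _ hx => ⟨L.smul_mem c hx.1, M.smul_mem c hx.2⟩

end LatQ

namespace LatQ


lemma bform_comm' {ι : Type*} [Fintype ι] (F : Matrix ι ι ℚ) (h : F.IsSymm) (x y : ι → ℚ) :
    bform F x y = bform F y x := by
  unfold bform
  rw [dotProduct_mulVec, ← mulVec_transpose, h.eq, dotProduct_comm, dotProduct_mulVec,
    ← mulVec_transpose, h.eq]

lemma bform_qsmul_left' {ι : Type*} [Fintype ι] (F : Matrix ι ι ℚ) (c : ℚ) (x y : ι → ℚ) :
    bform F (c • x) y = c * bform F x y := by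
  unfold bform; rw [smul_dotProduct, smul_eq_mul]

lemma bform_qsmul_right' {ι : Type*} [Fintype ι] (F : Matrix ι ι ℚ) (c : ℚ) (x y : ι → ℚ) :
    bform F x (c • y) = c * bform F x y := by
  unfold bform; rw [mulVec_smul, dotProduct_smul, smul_eq_mul]

lemma bform_sub_left' {ι : Type*} [Fintype ι] (F : Matrix ι ι ℚ) (a b y : ι → ℚ) :
    bform F (a - b) y = bform F a y - bform F b y := sub_dotProduct a b _

/-- Let `M` be an even lattice of level exactly `p` (a prime) and
`v ∈ M` a primitive vector with `(v,v) > 0`.  The reflection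
`σ_v(x) = x - (2(x,v)/(v,v))·v` maps `M` onto itself if and only if `(v,v) = 2`, or
`(v,v) = 2p` and `(v,l) ∈ pℤ` for all `l ∈ M`. -/
theorem statement5 {ι : Type*} [Fintype ι] [DecidableEq ι] (p : ℕ) (hp : p.Prime)
    (F : Matrix ι ι ℚ) (L : Submodule ℤ (ι → ℚ))
    (hL : IsEvenLattice F L) (hlev : HasLevel F L p)
    (v : ι → ℚ) (hv : v ∈ L)
    (hprim : ∀ c : ℚ, c • v ∈ L → ∃ m : ℤ, c = (m : ℚ))
    (hpos : 0 < bform F v v) :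
    (fun x => x - (2 * bform F x v / bform F v v) • v) '' (L : Set (ι → ℚ)) = L ↔
      (bform F v v = 2 ∨
        (bform F v v = 2 * p ∧ ∀ l ∈ L, ∃ m : ℤ, bform F v l = p * m)) := by
  obtain ⟨a, hvv⟩ := hL.even v hv
  have ha0 : 0 < a := by
    have h1 : (0:ℚ) < 2 * a := hvv ▸ hpos
    have h2 : (0:ℚ) < (a:ℚ) := by linarith
    exact_mod_cast h2
  have haQ : ((a:ℚ)) ≠ 0 := by exact_mod_cast ha0.ne'
  have hvv0 : bform F v v ≠ 0 := hpos.ne'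
  constructor
  · intro h
    -- every (x,v) is divisible by a
    have key : ∀ x ∈ L, ∃ m : ℤ, bform F x v = (a : ℚ) * m := by
      intro x hx
      have hσ : x - (2 * bform F x v / bform F v v) • v ∈ (L : Set (ι → ℚ)) := by
        rw [← h]; exact ⟨x, hx, rfl⟩
      have hsm : (2 * bform F x v / bform F v v) • v ∈ L := by
        have := L.sub_mem hx hσ
        simpa using this
      obtain ⟨m, hm⟩ := hprim _ hsm
      refine ⟨m, ?_⟩
      rw [hvv] at hm
      field_simp at hm
      linarith
    -- the vector v/a lies in the dual lattice
    have hw : ((a:ℚ)⁻¹) • v ∈ dual F L := by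
      intro y hy
      obtain ⟨m, hm⟩ := key y hy
      refine ⟨m, ?_⟩
      rw [bform_qsmul_left', bform_comm' F hL.symm v y, hm]
      field_simp
    obtain ⟨m, hm⟩ := hlev.2.1 _ hw
    rw [bform_qsmul_left', bform_qsmul_right', hvv] at hm
    -- hm : p * ((a)⁻¹ * ((a)⁻¹ * (2*a))) = 2*m
    have hpm : (p : ℚ) = (m : ℚ) * a := by
      field_simp at hm
      nlinarith [hm]
    have hdvd : a ∣ (p : ℤ) := ⟨m, by exact_mod_cast hpm.trans (mul_comm _ _)⟩
    lift a to ℕ using ha0.le with n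
    have hn : n ∣ p := by exact_mod_cast hdvd
    rcases (Nat.Prime.eq_one_or_self_of_dvd hp n hn) with h1 | h1
    · left; rw [hvv, h1]; norm_num
    · right
      subst h1
      refine ⟨by rw [hvv]; norm_cast, fun l hl => ?_⟩
      obtain ⟨m', hm'⟩ := key l hl
      exact ⟨m', by rw [bform_comm' F hL.symm, hm']; norm_cast⟩
  · intro h
    -- the reflection coefficient is an integer
    have hint : ∀ x ∈ L, ∃ m : ℤ, 2 * bform F x v / bform F v v = (m : ℚ) := by
      intro x hx
      rcases h with h2 | ⟨h2p, hdiv⟩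
      · obtain ⟨m, hm⟩ := hL.integral x hx v hv
        exact ⟨m, by rw [h2, hm]; ring⟩
      · obtain ⟨m, hm⟩ := hdiv x hx
        have hp0 : ((p:ℚ)) ≠ 0 := by exact_mod_cast hp.ne_zero
        refine ⟨m, ?_⟩
        rw [h2p, bform_comm' F hL.symm x v, hm]
        field_simp
    have hmaps : ∀ x ∈ L, x - (2 * bform F x v / bform F v v) • v ∈ L := by
      intro x hx
      obtain ⟨m, hm⟩ := hint x hx
      rw [hm, Int.cast_smul_eq_zsmul]
      exact L.sub_mem hx (L.smul_mem m hv)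
    apply Set.Subset.antisymm
    · rintro _ ⟨x, hx, rfl⟩
      exact hmaps x hx
    · intro y hy
      set c := 2 * bform F y v / bform F v v with hc
      refine ⟨y - c • v, hmaps y hy, ?_⟩
      have h1 : bform F (y - c • v) v = -(bform F y v) := by
        rw [bform_sub_left', bform_qsmul_left', hc]
        field_simp
        ring
      show (y - c • v) - (2 * bform F (y - c • v) v / bform F v v) • v = y
      rw [h1]
      have h2 : 2 * -(bform F y v) / bform F v v = -c := by rw [hc]; ring
      rw [h2, neg_smul, sub_neg_eq_add, sub_add_cancel]


end LatQ
end

section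
/- Let p ≥ 7 be a prime with p ≡ 3 (mod 4), and let L_p be the lattice ℤ² with Gram matrix [[2,1],[1,(p+1)/2]]. Then L_p is a positive definite even lattice of determinant p and level p, and moreover #{v ∈ L_p : (v,v) = 2} = 2 and #{v ∈ L_p : (v,v) = 2p and (v,x) ∈ pℤ for all x ∈ L_p} = 2. (That is, the root system of L_p is A₁ ⊕ A₁(p).) -/
open Matrix

namespace LatQ

lemma mem_stdLat' {ι : Type*} {x : ι → ℚ} : x ∈ stdLat ι ↔ ∀ i, isIntQ (x i) := Iff.rfl

lemma mem_dual' {ι : Type*} [Fintype ι] {F : Matrix ι ι ℚ} {L : Submodule ℤ (ι → ℚ)}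
    {x : ι → ℚ} : x ∈ dual F L ↔ ∀ y ∈ L, isIntQ (bform F x y) := Iff.rfl

lemma bform_eval2 (q : ℤ) (x y : Fin 2 → ℚ) :
    bform ((!![2,1;1,q]).map ((↑) : ℤ → ℚ)) x y
      = (2*x 0 + x 1)*y 0 + (x 0 + (q : ℚ)*x 1)*y 1 := by
  simp [bform, Matrix.mulVec, dotProduct, Fin.sum_univ_two, Matrix.map_apply]
  ring

lemma key2 (q : ℤ) (v w : Fin 2 → ℤ) :
    v ⬝ᵥ !![2, 1; 1, q] *ᵥ w = (2*v 0 + v 1)*(w 0) + (v 0 + q * v 1)*(w 1) := by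
  simp [Matrix.mulVec, dotProduct, Fin.sum_univ_two]; ring

lemma vec_eq2 (v : Fin 2 → ℤ) (a b : ℤ) (h0 : v 0 = a) (h1 : v 1 = b) : v = ![a,b] := by
  funext i; fin_cases i <;> simpa

lemma class_norm2 {p q a b : ℤ} (hq : 2*q = p+1) (hp7 : 7 ≤ p)
    (h : (2*a + b)*a + (a + q*b)*b = 2) : (a = 1 ∧ b = 0) ∨ (a = -1 ∧ b = 0) := by
  have hb : b = 0 := by nlinarith [sq_nonneg (2*a+b), sq_nonneg b, sq_nonneg (b*b - 1)]
  subst hb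
  have : (a-1)*(a+1) = 0 := by nlinarith
  rcases mul_eq_zero.mp this with h | h
  · exact Or.inl ⟨by omega, rfl⟩
  · exact Or.inr ⟨by omega, rfl⟩

lemma class_norm2p {p q a b t : ℤ} (hq : 2*q = p+1) (hp7 : 7 ≤ p)
    (h : (2*a + b)*a + (a + q*b)*b = 2*p) (ht : 2*a + b = p*t) :
    (a = -1 ∧ b = 2) ∨ (a = 1 ∧ b = -2) := by
  have h2 : p*t^2 + b^2 = 4 := by
    have hp0 : p ≠ 0 := by omega
    have h3 : p*(p*t^2 + b^2) = p*4 := by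
      linear_combination 2*h - b^2*hq - (2*a+b+p*t)*ht
    exact mul_left_cancel₀ hp0 h3
  have ht0 : t = 0 := by
    nlinarith [sq_nonneg b, sq_nonneg t, sq_nonneg (t-1), sq_nonneg (t+1)]
  subst ht0
  have ht' : 2*a + b = 0 := by linarith [ht]
  have hb : (b-2)*(b+2) = 0 := by linear_combination h2
  rcases mul_eq_zero.mp hb with h' | h'
  · exact Or.inl ⟨by omega, by omega⟩
  · exact Or.inr ⟨by omega, by omega⟩

/-- Let `p ≥ 7` be a prime with `p ≡ 3 (mod 4)` and let `L_p` be the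
lattice `ℤ²` with Gram matrix `[[2,1],[1,(p+1)/2]]`.  Then `L_p` is a positive definite
even lattice of determinant `p` and level `p`, it has exactly two vectors of norm `2`,
and exactly two vectors `v` with `(v,v) = 2p` and `(v,x) ∈ pℤ` for all `x`. -/
theorem statement14 (p : ℕ) (hp : p.Prime) (hp7 : 7 ≤ p) (hp3 : p % 4 = 3) :
    (∀ v : Fin 2 → ℤ, v ≠ 0 → 0 < v ⬝ᵥ !![2, 1; 1, ((p : ℤ) + 1) / 2] *ᵥ v) ∧
    (∀ v : Fin 2 → ℤ, ∃ m : ℤ, v ⬝ᵥ !![2, 1; 1, ((p : ℤ) + 1) / 2] *ᵥ v = 2 * m) ∧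
    (!![2, 1; 1, ((p : ℤ) + 1) / 2]).det = p ∧
    HasLevel ((!![2, 1; 1, ((p : ℤ) + 1) / 2]).map ((↑) : ℤ → ℚ)) (stdLat (Fin 2)) p ∧
    Nat.card {v : Fin 2 → ℤ // v ⬝ᵥ !![2, 1; 1, ((p : ℤ) + 1) / 2] *ᵥ v = 2} = 2 ∧
    Nat.card {v : Fin 2 → ℤ // v ⬝ᵥ !![2, 1; 1, ((p : ℤ) + 1) / 2] *ᵥ v = 2 * p ∧
      ∀ x : Fin 2 → ℤ, (p : ℤ) ∣ v ⬝ᵥ !![2, 1; 1, ((p : ℤ) + 1) / 2] *ᵥ x} = 2 := by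
  have hpZ4 : (p : ℤ) % 4 = 3 := by omega
  set q : ℤ := ((p : ℤ) + 1) / 2 with hqdef
  have hq : 2*q = (p:ℤ) + 1 := by omega
  obtain ⟨q', hq'⟩ : ∃ q' : ℤ, q = 2*q' := ⟨((p:ℤ)+1)/4, by omega⟩
  have hp7' : 7 ≤ (p:ℤ) := by exact_mod_cast hp7
  have hqQ : 2*(q:ℚ) = (p:ℚ) + 1 := by exact_mod_cast hq
  have hp0 : (p:ℚ) ≠ 0 := by positivity
  refine ⟨?_, ?_, ?_, ?_, ?_, ?_⟩
  · -- positive definite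
    intro v hv
    rw [key2]
    have hvne : v 0 ≠ 0 ∨ v 1 ≠ 0 := by
      by_contra hcon
      push_neg at hcon
      exact hv (funext fun i => by fin_cases i <;> simp [hcon.1, hcon.2])
    have h2Q : 2*((2*v 0 + v 1)*(v 0) + (v 0 + q*v 1)*(v 1))
        = (2*v 0 + v 1)^2 + (p:ℤ)*(v 1)^2 := by linear_combination (v 1)^2 * hq
    rcases hvne with h | h
    · rcases (em (v 1 = 0)) with h1 | h1
      · have h1' : 1 ≤ (v 0)^2 := by
          rcases lt_or_gt_of_ne h with h' | h' <;> nlinarith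
        have hQ' : (2*v 0 + v 1)*(v 0) + (v 0 + q*v 1)*(v 1) = 2*(v 0)^2 := by
          rw [h1]; ring
        rw [hQ']; linarith
      · have h1' : 1 ≤ (v 1)^2 := by
          rcases lt_or_gt_of_ne h1 with h' | h' <;> nlinarith
        nlinarith [sq_nonneg (2*v 0 + v 1)]
    · have h1' : 1 ≤ (v 1)^2 := by
        rcases lt_or_gt_of_ne h with h' | h' <;> nlinarith
      nlinarith [sq_nonneg (2*v 0 + v 1)]
  · -- even
    intro v
    rw [key2]
    exact ⟨(v 0)^2 + (v 0)*(v 1) + q'*(v 1)^2, by linear_combination (v 1)^2 * hq'⟩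
  · -- determinant
    rw [Matrix.det_fin_two_of]
    omega
  · -- level
    refine ⟨by omega, ?_, ?_⟩
    · intro x hx
      have he0 : (![1,0] : Fin 2 → ℚ) ∈ stdLat (Fin 2) := by
        rw [mem_stdLat']
        intro i; fin_cases i
        exacts [⟨1, by norm_num⟩, ⟨0, by norm_num⟩]
      have he1 : (![0,1] : Fin 2 → ℚ) ∈ stdLat (Fin 2) := by
        rw [mem_stdLat']
        intro i; fin_cases i
        exacts [⟨0, by norm_num⟩, ⟨1, by norm_num⟩]
      obtain ⟨m0, hm0⟩ := (mem_dual'.mp hx) ![1,0] he0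
      obtain ⟨m1, hm1⟩ := (mem_dual'.mp hx) ![0,1] he1
      rw [bform_eval2] at hm0 hm1
      simp at hm0 hm1
      have h0 : 2*x 0 + x 1 = (m0:ℚ) := by linear_combination hm0
      have h1 : x 0 + (q:ℚ)*x 1 = (m1:ℚ) := by linear_combination hm1
      have hx0 : (p:ℚ)*x 0 = (q:ℚ)*m0 - m1 := by
        linear_combination (q:ℚ)*h0 - h1 - x 0 * hqQ
      have hx1 : (p:ℚ)*x 1 = 2*m1 - m0 := by
        linear_combination 2*h1 - h0 - x 1 * hqQ
      refine ⟨q'*m0^2 - m0*m1 + m1^2, ?_⟩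
      rw [bform_eval2]
      have hq'Q : (q:ℚ) = 2*(q':ℚ) := by exact_mod_cast hq'
      push_cast
      linear_combination ((p:ℚ)*x 0)*h0 + ((p:ℚ)*x 1)*h1 + (m0:ℚ)*hx0 + (m1:ℚ)*hx1
        + (m0:ℚ)^2*hq'Q
    · intro N' hN'pos hN'
      have hmem : (![(q:ℚ)/p, -1/p] : Fin 2 → ℚ) ∈ dual
          ((!![2, 1; 1, q]).map ((↑) : ℤ → ℚ)) (stdLat (Fin 2)) := by
        rw [mem_dual']
        intro y hy
        obtain ⟨k, hk⟩ := (mem_stdLat'.mp hy) 0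
        refine ⟨k, ?_⟩
        rw [bform_eval2, ← hk]
        simp only [Matrix.cons_val_zero, Matrix.cons_val_one, Matrix.head_cons]
        have hc1 : 2*((q:ℚ)/p) + (-1/p) = 1 := by
          field_simp
          linarith [hqQ]
        have hc2 : (q:ℚ)/p + (q:ℚ)*(-1/p) = 0 := by ring
        rw [hc1, hc2]
        ring
      obtain ⟨m, hm⟩ := hN' _ hmem
      rw [bform_eval2] at hm
      simp only [Matrix.cons_val_zero, Matrix.cons_val_one, Matrix.head_cons] at hm
      have hmQ : (N':ℚ)*(q:ℚ) = 2*m*p := by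
        field_simp at hm
        refine mul_left_cancel₀ hp0 ?_
        linear_combination hm - (N':ℚ)*(q:ℚ)*hqQ
      have hmz : (N':ℤ)*q = 2*m*p := by exact_mod_cast hmQ
      have hpZ : Prime (p:ℤ) := Nat.prime_iff_prime_int.mp hp
      have hdvd : (p:ℤ) ∣ (N':ℤ)*q := ⟨2*m, by linarith⟩
      have hnq : ¬ (p:ℤ) ∣ q := by
        intro hd
        have h1 : (p:ℤ) ∣ (p:ℤ)+1 := hq ▸ hd.mul_left 2
        have h2 : (p:ℤ) ∣ 1 := (dvd_add_right (dvd_refl _)).mp h1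
        have := Int.le_of_dvd one_pos h2
        omega
      have hdN : (p:ℤ) ∣ (N':ℤ) := (hpZ.dvd_mul.mp hdvd).resolve_right hnq
      exact Nat.le_of_dvd hN'pos (Int.ofNat_dvd.mp hdN)
  · -- two vectors of norm 2
    rw [Nat.card_eq_two_iff]
    refine ⟨⟨![1,0], by rw [key2]; norm_num⟩, ⟨![-1,0], by rw [key2]; norm_num⟩, ?_, ?_⟩
    · intro hcon
      have := congrFun (congrArg Subtype.val hcon) 0
      simp at this
    · rw [Set.eq_univ_iff_forall]
      rintro ⟨v, hv⟩
      rw [key2] at hv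
      rcases class_norm2 hq hp7' hv with ⟨h0, h1⟩ | ⟨h0, h1⟩
      · exact Or.inl (Subtype.ext (vec_eq2 v 1 0 h0 h1))
      · exact Or.inr (Subtype.ext (vec_eq2 v (-1) 0 h0 h1))
  · -- two vectors of norm 2p in p·L^∨
    rw [Nat.card_eq_two_iff]
    have hv1 : (![(-1:ℤ),2] : Fin 2 → ℤ) ⬝ᵥ !![2, 1; 1, q] *ᵥ ![(-1:ℤ),2] = 2*p ∧
        ∀ x : Fin 2 → ℤ, (p:ℤ) ∣ (![(-1:ℤ),2] : Fin 2 → ℤ) ⬝ᵥ !![2, 1; 1, q] *ᵥ x := by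
      constructor
      · rw [key2]; simp; linear_combination 2*hq
      · intro x
        rw [key2]
        refine ⟨x 1, ?_⟩
        simp only [Matrix.cons_val_zero, Matrix.cons_val_one, Matrix.head_cons]
        linear_combination (x 1)*hq
    have hv2 : (![(1:ℤ),-2] : Fin 2 → ℤ) ⬝ᵥ !![2, 1; 1, q] *ᵥ ![(1:ℤ),-2] = 2*p ∧
        ∀ x : Fin 2 → ℤ, (p:ℤ) ∣ (![(1:ℤ),-2] : Fin 2 → ℤ) ⬝ᵥ !![2, 1; 1, q] *ᵥ x := by
      constructor
      · rw [key2]; simp; linear_combination 2*hq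
      · intro x
        rw [key2]
        refine ⟨-x 1, ?_⟩
        simp only [Matrix.cons_val_zero, Matrix.cons_val_one, Matrix.head_cons]
        linear_combination (-(x 1))*hq
    refine ⟨⟨![(-1:ℤ),2], hv1⟩, ⟨![(1:ℤ),-2], hv2⟩, ?_, ?_⟩
    · intro hcon
      have := congrFun (congrArg Subtype.val hcon) 0
      simp at this
    · rw [Set.eq_univ_iff_forall]
      rintro ⟨v, hQ, hdvd⟩
      have hd0 : (p:ℤ) ∣ 2*v 0 + v 1 := by
        have := hdvd ![1,0]
        rw [key2] at this
        simpa using this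
      obtain ⟨t, ht⟩ := hd0
      rw [key2] at hQ
      rcases class_norm2p hq hp7' hQ ht with ⟨h0, h1⟩ | ⟨h0, h1⟩
      · exact Or.inl (Subtype.ext (vec_eq2 v (-1) 2 h0 h1))
      · exact Or.inr (Subtype.ext (vec_eq2 v 1 (-2) h0 h1))

end LatQ
end

section
/- Let T₄ be the lattice ℤ⁴ with Gram matrix [[2,1,1,1],[1,2,0,1],[1,0,4,2],[1,1,2,4]]. Then T₄ is a positive definite even lattice with determinant 25 and level 5, and the subgroup of T₄ generated by the set {v ∈ T₄ : (v,v) = 2} is a sublattice of rank 2 isometric to the root lattice A₂; in particular, the vectors of norm 2 in T₄ do not span T₄⊗ℚ. -/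
open Matrix

namespace LatQ

/-- The Gram matrix of the lattice `T₄`. -/
def T4 : Matrix (Fin 4) (Fin 4) ℤ :=
  !![2, 1, 1, 1; 1, 2, 0, 1; 1, 0, 4, 2; 1, 1, 2, 4]

/-- The Gram matrix of the root lattice `A₂`. -/
def A2 : Matrix (Fin 2) (Fin 2) ℤ := !![2, -1; -1, 2]


lemma quad_expand (v : Fin 4 → ℤ) : v ⬝ᵥ T4 *ᵥ v =
    2*(v 0)^2 + 2*(v 1)^2 + 4*(v 2)^2 + 4*(v 3)^2 + 2*(v 0)*(v 1) + 2*(v 0)*(v 2)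
      + 2*(v 0)*(v 3) + 2*(v 1)*(v 3) + 4*(v 2)*(v 3) := by
  simp [T4, Matrix.mulVec, dotProduct, Fin.sum_univ_four,
    Matrix.cons_val_zero, Matrix.cons_val_one, Matrix.head_cons,
    Matrix.vecHead, Matrix.vecTail]
  ring

lemma posdefT4 (v : Fin 4 → ℤ) (hv : v ≠ 0) : 0 < v ⬝ᵥ T4 *ᵥ v := by
  rw [quad_expand]
  set a := v 0; set b := v 1; set c := v 2; set d := v 3
  by_contra h
  push_neg at h
  have hd : d = 0 := by
    nlinarith [sq_nonneg (2*a+b+c+d), sq_nonneg (3*b-c+d), sq_nonneg (2*c+d), sq_nonneg d]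
  have hc : c = 0 := by
    nlinarith [sq_nonneg (2*a+b+c+d), sq_nonneg (3*b-c+d), sq_nonneg (2*c+d), sq_nonneg c]
  have hb : b = 0 := by nlinarith [sq_nonneg (2*a+b+c+d), sq_nonneg (3*b-c+d), sq_nonneg b]
  have ha : a = 0 := by nlinarith [sq_nonneg (2*a+b+c+d), sq_nonneg a]
  exact hv (funext fun i => by fin_cases i <;> assumption)

lemma detT4 : T4.det = 25 := by
  simp [T4, Matrix.det_succ_row_zero, Fin.sum_univ_succ, Fin.succAbove]

lemma norm2_coords (v : Fin 4 → ℤ) (hv : v ⬝ᵥ T4 *ᵥ v = 2) : v 2 = 0 ∧ v 3 = 0 := by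
  rw [quad_expand] at hv
  set a := v 0; set b := v 1; set c := v 2; set d := v 3
  have hd2 : d^2 < 1 := by
    nlinarith [sq_nonneg (2*a+b+c+d), sq_nonneg (3*b-c+d), sq_nonneg (2*c+d)]
  have hd : d = 0 := by
    have h0 : d ^ 2 = 0 := le_antisymm (Int.lt_add_one_iff.mp (by linarith)) (sq_nonneg d)
    exact pow_eq_zero_iff two_ne_zero |>.mp h0
  have hc2 : c^2 < 1 := by nlinarith [sq_nonneg (2*a+b+c+d), sq_nonneg (3*b-c+d)]
  have hc : c = 0 := by
    have h0 : c ^ 2 = 0 := le_antisymm (Int.lt_add_one_iff.mp (by linarith)) (sq_nonneg c)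
    exact pow_eq_zero_iff two_ne_zero |>.mp h0
  exact ⟨hc, hd⟩

lemma bform_expand (x y : Fin 4 → ℚ) : bform (T4.map ((↑) : ℤ → ℚ)) x y =
    2*x 0*y 0 + x 0*y 1 + x 0*y 2 + x 0*y 3 + x 1*y 0 + 2*x 1*y 1 + x 1*y 3
      + x 2*y 0 + 4*x 2*y 2 + 2*x 2*y 3 + x 3*y 0 + x 3*y 1 + 2*x 3*y 2 + 4*x 3*y 3 := by
  simp [bform, T4, Matrix.mulVec, dotProduct, Fin.sum_univ_four, Matrix.map,
    Matrix.cons_val_zero, Matrix.cons_val_one, Matrix.head_cons,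
    Matrix.vecHead, Matrix.vecTail]
  ring

lemma basis_mem0 : (![1,0,0,0] : Fin 4 → ℚ) ∈ stdLat (Fin 4) := by
  intro i; fin_cases i
  exacts [⟨1, by norm_num⟩, ⟨0, by norm_num⟩, ⟨0, by norm_num⟩, ⟨0, by norm_num⟩]
lemma basis_mem1 : (![0,1,0,0] : Fin 4 → ℚ) ∈ stdLat (Fin 4) := by
  intro i; fin_cases i
  exacts [⟨0, by norm_num⟩, ⟨1, by norm_num⟩, ⟨0, by norm_num⟩, ⟨0, by norm_num⟩]
lemma basis_mem2 : (![0,0,1,0] : Fin 4 → ℚ) ∈ stdLat (Fin 4) := by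
  intro i; fin_cases i
  exacts [⟨0, by norm_num⟩, ⟨0, by norm_num⟩, ⟨1, by norm_num⟩, ⟨0, by norm_num⟩]
lemma basis_mem3 : (![0,0,0,1] : Fin 4 → ℚ) ∈ stdLat (Fin 4) := by
  intro i; fin_cases i
  exacts [⟨0, by norm_num⟩, ⟨0, by norm_num⟩, ⟨0, by norm_num⟩, ⟨1, by norm_num⟩]

lemma levelT4 : HasLevel (T4.map ((↑) : ℤ → ℚ)) (stdLat (Fin 4)) 5 := by
  refine ⟨by norm_num, ?_, ?_⟩
  · intro x hx
    obtain ⟨w0, hw0⟩ := hx _ basis_mem0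
    obtain ⟨w1, hw1⟩ := hx _ basis_mem1
    obtain ⟨w2, hw2⟩ := hx _ basis_mem2
    obtain ⟨w3, hw3⟩ := hx _ basis_mem3
    rw [bform_expand] at hw0 hw1 hw2 hw3
    norm_num [Matrix.cons_val_zero, Matrix.cons_val_one, Matrix.head_cons, Matrix.cons_val_two, Matrix.cons_val_three, Matrix.tail_cons] at hw0 hw1 hw2 hw3
    refine ⟨2*w0^2 + 2*w1^2 + w2^2 + w3^2 - 2*w0*w1 - w0*w2 + w1*w2 - w1*w3 - w2*w3, ?_⟩
    rw [bform_expand]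
    have e0 : x 0 = ((4*w0 - 2*w1 - w2 : ℤ) : ℚ)/5 := by
      push_cast; linear_combination (4*hw0 - 2*hw1 - hw2)/5
    have e1 : x 1 = ((-2*w0 + 4*w1 + w2 - w3 : ℤ) : ℚ)/5 := by
      push_cast; linear_combination (-2*hw0 + 4*hw1 + hw2 - hw3)/5
    have e2 : x 2 = ((-w0 + w1 + 2*w2 - w3 : ℤ) : ℚ)/5 := by
      push_cast; linear_combination (-hw0 + hw1 + 2*hw2 - hw3)/5
    have e3 : x 3 = ((-w1 - w2 + 2*w3 : ℤ) : ℚ)/5 := by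
      push_cast; linear_combination (-hw1 - hw2 + 2*hw3)/5
    rw [e0, e1, e2, e3]
    push_cast
    ring
  · intro N' hN' hall
    by_contra hlt
    push_neg at hlt
    have hmem : (![4/5, -2/5, -1/5, 0] : Fin 4 → ℚ) ∈
        dual (T4.map ((↑) : ℤ → ℚ)) (stdLat (Fin 4)) := by
      intro y hy
      have : bform (T4.map ((↑) : ℤ → ℚ)) (![4/5, -2/5, -1/5, 0]) y = y 0 := by
        rw [bform_expand]
        norm_num [Matrix.cons_val_two, Matrix.cons_val_three, Matrix.tail_cons]
        ring
      rw [this]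
      exact hy 0
    obtain ⟨m, hm⟩ := hall _ hmem
    rw [bform_expand] at hm
    norm_num [Matrix.cons_val_two, Matrix.cons_val_three, Matrix.tail_cons] at hm
    have h2 : (2 * (N' : ℤ) : ℚ) = ((5 * m : ℤ) : ℚ) := by push_cast; linarith
    have h3 : 2 * (N' : ℤ) = 5 * m := by exact_mod_cast h2
    omega

/-- The rank-2 sublattice `{v | v 2 = 0 ∧ v 3 = 0}`. -/
def M' : Submodule ℤ (Fin 4 → ℤ) where
  carrier := {v | v 2 = 0 ∧ v 3 = 0}
  zero_mem' := ⟨rfl, rfl⟩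
  add_mem' := fun ha hb => ⟨by simp [ha.1, hb.1], by simp [ha.2, hb.2]⟩
  smul_mem' := fun c _ hx => ⟨by simp [hx.1], by simp [hx.2]⟩

lemma e0_mem : (![1,0,0,0] : Fin 4 → ℤ) ∈ {v : Fin 4 → ℤ | v ⬝ᵥ T4 *ᵥ v = 2} := by
  show _ = _
  rw [quad_expand]; norm_num [Matrix.cons_val_two, Matrix.cons_val_three, Matrix.tail_cons]

lemma e1_mem : (![0,1,0,0] : Fin 4 → ℤ) ∈ {v : Fin 4 → ℤ | v ⬝ᵥ T4 *ᵥ v = 2} := by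
  show _ = _
  rw [quad_expand]; norm_num [Matrix.cons_val_two, Matrix.cons_val_three, Matrix.tail_cons]

lemma span_eq : Submodule.span ℤ {v : Fin 4 → ℤ | v ⬝ᵥ T4 *ᵥ v = 2} = M' := by
  apply le_antisymm
  · rw [Submodule.span_le]
    intro v hv
    exact norm2_coords v hv
  · intro v hv
    obtain ⟨h2, h3⟩ := hv
    have hrep : v = v 0 • ![1,0,0,0] + v 1 • ![0,1,0,0] := by
      funext i; fin_cases i <;> simp [h2, h3]
    rw [hrep]
    exact Submodule.add_mem _
      (Submodule.smul_mem _ _ (Submodule.subset_span e0_mem))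
      (Submodule.smul_mem _ _ (Submodule.subset_span e1_mem))

/-- The isometry from `M'` to `ℤ²`. -/
def fM : M' ≃ₗ[ℤ] (Fin 2 → ℤ) where
  toFun x := ![x.1 0, -(x.1 1)]
  map_add' x y := by funext i; fin_cases i <;> simp <;> ring
  map_smul' c x := by funext i; fin_cases i <;> simp
  invFun p := ⟨![p 0, -(p 1), 0, 0], ⟨rfl, rfl⟩⟩
  left_inv x := by
    apply Subtype.ext
    funext i
    fin_cases i <;> simp [x.2.1, x.2.2]
  right_inv p := by
    funext i
    fin_cases i <;> simp

noncomputable def eIso :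
    (Submodule.span ℤ {v : Fin 4 → ℤ | v ⬝ᵥ T4 *ᵥ v = 2}) ≃ₗ[ℤ] (Fin 2 → ℤ) :=
  (LinearEquiv.ofEq _ _ span_eq).trans fM

lemma eIso_gram (x y : Submodule.span ℤ {v : Fin 4 → ℤ | v ⬝ᵥ T4 *ᵥ v = 2}) :
    (eIso x) ⬝ᵥ A2 *ᵥ (eIso y) = (x : Fin 4 → ℤ) ⬝ᵥ T4 *ᵥ (y : Fin 4 → ℤ) := by
  have hx := (span_eq ▸ x.2 : (x : Fin 4 → ℤ) ∈ M')
  have hy := (span_eq ▸ y.2 : (y : Fin 4 → ℤ) ∈ M')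
  have hex : eIso x = ![(x : Fin 4 → ℤ) 0, -((x : Fin 4 → ℤ) 1)] := rfl
  have hey : eIso y = ![(y : Fin 4 → ℤ) 0, -((y : Fin 4 → ℤ) 1)] := rfl
  rw [hex, hey]
  simp [A2, T4, Matrix.mulVec, dotProduct, Fin.sum_univ_two, Fin.sum_univ_four,
    Matrix.cons_val_zero, Matrix.cons_val_one, Matrix.head_cons,
    Matrix.vecHead, Matrix.vecTail, hx.1, hx.2, hy.1, hy.2]
  ring

lemma not_top : Submodule.span ℚ
    ((fun v : Fin 4 → ℤ => (fun i => (v i : ℚ))) '' {v | v ⬝ᵥ T4 *ᵥ v = 2}) ≠ ⊤ := by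
  intro htop
  have hle : Submodule.span ℚ
      ((fun v : Fin 4 → ℤ => (fun i => (v i : ℚ))) '' {v | v ⬝ᵥ T4 *ᵥ v = 2}) ≤
      LinearMap.ker (LinearMap.proj (R := ℚ) (φ := fun _ : Fin 4 => ℚ) 2) := by
    rw [Submodule.span_le]
    rintro _ ⟨v, hv, rfl⟩
    simp [LinearMap.mem_ker, (norm2_coords v hv).1]
  rw [htop] at hle
  have : (![0,0,1,0] : Fin 4 → ℚ) ∈
      LinearMap.ker (LinearMap.proj (R := ℚ) (φ := fun _ : Fin 4 => ℚ) 2) :=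
    hle Submodule.mem_top
  simp [LinearMap.mem_ker] at this

/-- `T₄` is a positive definite even lattice of determinant `25` and
level `5`; the subgroup generated by its vectors of norm `2` is a sublattice of rank `2`
isometric to `A₂`; in particular the norm `2` vectors do not span `T₄ ⊗ ℚ`. -/
theorem statement19 :
    (∀ v : Fin 4 → ℤ, v ≠ 0 → 0 < v ⬝ᵥ T4 *ᵥ v) ∧
    (∀ v : Fin 4 → ℤ, ∃ m : ℤ, v ⬝ᵥ T4 *ᵥ v = 2 * m) ∧
    T4.det = 25 ∧
    HasLevel (T4.map ((↑) : ℤ → ℚ)) (stdLat (Fin 4)) 5 ∧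
    (∃ e : (Submodule.span ℤ {v : Fin 4 → ℤ | v ⬝ᵥ T4 *ᵥ v = 2}) ≃ₗ[ℤ] (Fin 2 → ℤ),
      ∀ x y : Submodule.span ℤ {v : Fin 4 → ℤ | v ⬝ᵥ T4 *ᵥ v = 2},
        (e x) ⬝ᵥ A2 *ᵥ (e y) = (x : Fin 4 → ℤ) ⬝ᵥ T4 *ᵥ (y : Fin 4 → ℤ)) ∧
    Submodule.span ℚ
        ((fun v : Fin 4 → ℤ => (fun i => (v i : ℚ))) '' {v | v ⬝ᵥ T4 *ᵥ v = 2}) ≠ ⊤ := by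
  refine ⟨posdefT4, ?_, detT4, levelT4, ⟨eIso, eIso_gram⟩, not_top⟩
  intro v
  exact ⟨(v 0)^2 + (v 1)^2 + 2*(v 2)^2 + 2*(v 3)^2 + (v 0)*(v 1) + (v 0)*(v 2)
      + (v 0)*(v 3) + (v 1)*(v 3) + 2*(v 2)*(v 3), by rw [quad_expand]; ring⟩


end LatQ
end
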